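/- Let k be a field and V a finite-dimensional k-vector space of dimension n ≥ 1. Let T be a subgroup of GL(V) admitting a weight decomposition V = ⊕_{i∈I} V_i with weights χ_i pairwise distinct, and let u ∈ GL(V) be a unipotent automorphism with a single Jordan block which normalizes T (i.e. u·T·u⁻¹ = T). Then all the weight spaces V_i have the same dimension d (so n = d·|I|); moreover, there exists a k-subspace W of V with 0 ≠ W ≠ V that is invariant under u and under every element of T if and only if d > 1. -/

import Mathlib

open Module

lemma auxKerDim {k V : Type*} [Field k] [AddCommGroup V] [Module k V]
    [FiniteDimensional k V] (N : Module.End k V)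
    (hN : N ^ Module.finrank k V = 0)
    (hreg : N ^ (Module.finrank k V - 1) ≠ 0)
    {j : ℕ} (hj : j ≤ Module.finrank k V) :
    Module.finrank k (LinearMap.ker (N ^ j)) = j := by
  set n := Module.finrank k V with hn
  have hstrict : ∀ m, m < n → LinearMap.ker (N ^ m) < LinearMap.ker (N ^ (m + 1)) := by
    intro m hm
    refine lt_of_le_of_ne ?_ ?_
    · rw [pow_succ']
      exact LinearMap.ker_le_ker_comp _ _
    · intro heq
      have h1 : LinearMap.ker (N ^ m) = LinearMap.ker (N ^ (m + (n - m))) :=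
        Module.End.ker_pow_constant heq _
      have h2 : LinearMap.ker (N ^ m) = LinearMap.ker (N ^ (m + (n - 1 - m))) :=
        Module.End.ker_pow_constant heq _
      rw [Nat.add_sub_cancel' hm.le] at h1
      rw [Nat.add_sub_cancel' (Nat.le_sub_one_of_lt hm)] at h2
      apply hreg
      rw [← LinearMap.ker_eq_top, ← h2, h1, hN, LinearMap.ker_zero]
  have hstep : ∀ a b, a + b ≤ n →
      Module.finrank k (LinearMap.ker (N ^ a)) + b ≤
        Module.finrank k (LinearMap.ker (N ^ (a + b))) := by
    intro a b
    induction b with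
    | zero => simp
    | succ b ih =>
      intro hab
      have h1 := ih (by omega)
      have h2 : Module.finrank k (LinearMap.ker (N ^ (a + b))) <
          Module.finrank k (LinearMap.ker (N ^ (a + b + 1))) :=
        Submodule.finrank_lt_finrank_of_lt (hstrict _ (by omega))
      have he : a + (b + 1) = a + b + 1 := rfl
      rw [he]
      omega
  have hgn : Module.finrank k (LinearMap.ker (N ^ n)) = n := by
    rw [hN, LinearMap.ker_zero, finrank_top]
  have hg0 : Module.finrank k (LinearMap.ker (N ^ (0:ℕ))) = 0 := by
    rw [pow_zero]
    rw [show LinearMap.ker (1 : Module.End k V) = ⊥ from LinearMap.ker_id]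
    exact finrank_bot k V
  have h1 := hstep 0 j (by omega)
  have h2 := hstep j (n - j) (by omega)
  rw [Nat.add_sub_cancel' hj] at h2
  rw [zero_add] at h1
  omega

lemma auxInvKer {k V : Type*} [Field k] [AddCommGroup V] [Module k V]
    [FiniteDimensional k V] (N : Module.End k V)
    (hN : N ^ Module.finrank k V = 0)
    (hreg : N ^ (Module.finrank k V - 1) ≠ 0)
    (W : Submodule k V) (hW : ∀ w ∈ W, N w ∈ W) :
    W = LinearMap.ker (N ^ Module.finrank k W) := by
  have hWle : Module.finrank k (↥W) ≤ Module.finrank k V := W.finrank_le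
  have hres : W ≤ LinearMap.ker (N ^ Module.finrank k (↥W)) := by
    have hker : LinearMap.ker ((N.restrict hW) ^ Module.finrank k V) = ⊤ := by
      rw [Module.End.pow_restrict (p := W) (Module.finrank k V) hW]
      ext x
      simp [LinearMap.restrict_apply, hN]
    have h2 := Module.End.ker_pow_eq_ker_pow_finrank_of_le
      (f := N.restrict hW) (m := Module.finrank k V) hWle
    rw [hker] at h2
    have h3 : ((N.restrict hW) ^ Module.finrank k (↥W)) = 0 := by
      rw [← LinearMap.ker_eq_top, ← h2]
    rw [Module.End.pow_restrict (p := W) (Module.finrank k (↥W)) hW] at h3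
    intro w hw
    have := congrArg (fun f => (Subtype.val (f ⟨w, hw⟩) : V)) h3
    simpa [LinearMap.restrict_apply] using this
  exact Submodule.eq_of_le_of_finrank_eq hres
    (by rw [auxKerDim N hN hreg hWle])


lemma auxFinrankBiSup {k V I : Type*} [Field k] [AddCommGroup V] [Module k V]
    [FiniteDimensional k V] [DecidableEq I]
    (p : I → Submodule k V) (hp : iSupIndep p) (s : Finset I) :
    Module.finrank k (↥(⨆ i ∈ s, p i)) = ∑ i ∈ s, Module.finrank k (p i) := by
  classical
  induction s using Finset.induction with
  | empty => simp
  | @insert a s ha ih =>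
    have hdis : Disjoint (p a) (⨆ i ∈ s, p i) := by
      have := hp.disjoint_biSup (y := (↑s : Set I)) (by simpa using ha)
      simpa using this
    have hsup : (⨆ i ∈ insert a s, p i) = p a ⊔ ⨆ i ∈ s, p i := by
      simp [Finset.mem_insert, iSup_or, iSup_sup_eq]
    rw [hsup, Finset.sum_insert ha, ← ih]
    have := Submodule.finrank_sup_add_finrank_inf_eq (p a) (⨆ i ∈ s, p i)
    rw [disjoint_iff.mp hdis, finrank_bot] at this
    omega

/-- Proposition `prop:torus SL`.  Let `T ≤ GL(V)` admit a weight
decomposition `V = ⊕ᵢ Vᵢ` with pairwise distinct weights `χᵢ`, and let `u` be a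
unipotent automorphism of `V` with a single Jordan block normalising `T`.  Then all
weight spaces have the same dimension `d` (so `dim V = d * |I|`), and there is a
proper non-zero subspace invariant under `u` and `T` iff `d > 1`. -/
theorem stmt6 {k V : Type*} [Field k] [AddCommGroup V] [Module k V]
    [FiniteDimensional k V] (hn : 1 ≤ Module.finrank k V)
    (T : Subgroup (V ≃ₗ[k] V))
    {I : Type*} [Fintype I] [DecidableEq I]
    (Vi : I → Submodule k V) (hne : ∀ i, Vi i ≠ ⊥)
    (hdirect : DirectSum.IsInternal Vi)
    (χ : I → ↥T → k)
    (hχ : ∀ i, ∀ t : ↥T, ∀ v ∈ Vi i, (t : V ≃ₗ[k] V) v = χ i t • v)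
    (hdist : ∀ i j, i ≠ j → ∃ t : ↥T, χ i t ≠ χ j t)
    (u : V ≃ₗ[k] V)
    (hu : IsNilpotent ((u : Module.End k V) - 1))
    (hreg : ((u : Module.End k V) - 1) ^ (Module.finrank k V - 1) ≠ 0)
    (hnorm : ∀ t : V ≃ₗ[k] V, t ∈ T ↔ u * t * u⁻¹ ∈ T) :
    ∃ d : ℕ, (∀ i, Module.finrank k (Vi i) = d) ∧
      Module.finrank k V = d * Fintype.card I ∧
      ((∃ W : Submodule k V, W ≠ ⊥ ∧ W ≠ ⊤ ∧
          (∀ v ∈ W, u v ∈ W) ∧ ∀ t ∈ T, ∀ v ∈ W, t v ∈ W) ↔ 1 < d) := by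
  classical
  set n := Module.finrank k V with hn_def
  set N : Module.End k V := (u : Module.End k V) - 1 with hN_def
  -- N ^ n = 0
  have hNn : N ^ n = 0 := by
    obtain ⟨K, hK⟩ := hu
    have hmax : N ^ (max K n) = 0 := by
      rw [← Nat.sub_add_cancel (le_max_left K n), pow_add, hK, mul_zero]
    have := Module.End.ker_pow_eq_ker_pow_finrank_of_le
      (f := N) (m := max K n) (le_max_right K n)
    rw [← LinearMap.ker_eq_top, ← this, hmax, LinearMap.ker_zero]
  -- the coercion equivalence and projections
  set E := LinearEquiv.ofBijective (DirectSum.coeLinearMap Vi) hdirect with hE_def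
  set π : I → V →ₗ[k] V := fun i =>
    (Vi i).subtype ∘ₗ (DirectSum.component k I (fun i => ↥(Vi i)) i) ∘ₗ
      (E.symm : V →ₗ[k] DirectSum I (fun i => ↥(Vi i))) with hπ_def
  have hπ_apply : ∀ i v, π i v = ((E.symm v) i : V) := fun i v => rfl
  have hπ_mem : ∀ i v, π i v ∈ Vi i := fun i v => ((E.symm v) i).2
  have hπ_sum : ∀ v, ∑ i, π i v = v := by
    intro v
    have h1 : E (E.symm v) = v := E.apply_symm_apply v
    have h2 : ∑ i ∈ Finset.univ, DirectSum.of (fun i => ↥(Vi i)) i ((E.symm v) i)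
        = E.symm v := DirectSum.sum_univ_of _
    calc ∑ i, π i v
        = ∑ i, DirectSum.coeLinearMap Vi (DirectSum.of (fun i => ↥(Vi i)) i ((E.symm v) i)) := by
          refine Finset.sum_congr rfl fun i _ => ?_
          rw [hπ_apply, DirectSum.coeLinearMap_of]
      _ = DirectSum.coeLinearMap Vi (E.symm v) := by rw [← map_sum, h2]
      _ = v := h1
  have hπ_self : ∀ i v, v ∈ Vi i → π i v = v := by
    intro i v hv
    rw [hπ_apply, hdirect.ofBijective_coeLinearMap_of_mem hv]
  have hπ_ne : ∀ {i j} (_ : i ≠ j) v, v ∈ Vi i → π j v = 0 := by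
    intro i j hij v hv
    rw [hπ_apply, hdirect.ofBijective_coeLinearMap_of_mem_ne hij hv]
    rfl
  -- action of t in terms of projections
  have hact : ∀ (t : ↥T) (v : V) (i : I), π i ((t : V ≃ₗ[k] V) v) = χ i t • π i v := by
    intro t v i
    have hv : (t : V ≃ₗ[k] V) v = ∑ j, χ j t • π j v := by
      conv_lhs => rw [← hπ_sum v]
      rw [map_sum]
      exact Finset.sum_congr rfl fun j _ => hχ j t (π j v) (hπ_mem j v)
    rw [hv, map_sum]
    rw [Finset.sum_eq_single i]
    · rw [map_smul, hπ_self i _ (hπ_mem i v)]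
    · intro j _ hj
      rw [map_smul, hπ_ne hj _ (hπ_mem j v), smul_zero]
    · intro h
      exact absurd (Finset.mem_univ i) h
  -- simultaneous eigenvectors lie in a single weight space, with identified weight
  have heig : ∀ (ψ : ↥T → k) (x : V), x ≠ 0 →
      (∀ t : ↥T, (t : V ≃ₗ[k] V) x = ψ t • x) →
      ∃ i, x ∈ Vi i ∧ ∀ t, χ i t = ψ t := by
    intro ψ x hx hψ
    have hscal : ∀ i, π i x ≠ 0 → ∀ t, χ i t = ψ t := by
      intro i hi t
      have h1 : π i ((t : V ≃ₗ[k] V) x) = χ i t • π i x := hact t x i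
      have h2 : π i ((t : V ≃ₗ[k] V) x) = ψ t • π i x := by
        rw [hψ t, map_smul]
      have := h1.symm.trans h2
      have h3 : (χ i t - ψ t) • π i x = 0 := by
        rw [sub_smul, this, sub_self]
      rcases smul_eq_zero.mp h3 with h | h
      · exact sub_eq_zero.mp h
      · exact absurd h hi
    obtain ⟨i, hi⟩ : ∃ i, π i x ≠ 0 := by
      by_contra h
      push_neg at h
      apply hx
      rw [← hπ_sum x]
      exact Finset.sum_eq_zero fun i _ => h i
    refine ⟨i, ?_, hscal i hi⟩
    have hunique : ∀ j, j ≠ i → π j x = 0 := by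
      intro j hj
      by_contra hjne
      obtain ⟨t, ht⟩ := hdist j i hj
      exact ht ((hscal j hjne t).trans (hscal i hi t).symm)
    have : x = π i x := by
      conv_lhs => rw [← hπ_sum x]
      exact Finset.sum_eq_single i (fun j _ hj => hunique j hj)
        (fun h => absurd (Finset.mem_univ i) h)
    rw [this]
    exact hπ_mem i x
  -- u (and u⁻¹) map each weight space into a weight space
  have hconj : ∀ (w : V ≃ₗ[k] V), (∀ s : V ≃ₗ[k] V, s ∈ T ↔ w * s * w⁻¹ ∈ T) →
      ∀ i, ∃ j, ∀ v ∈ Vi i, w v ∈ Vi j := by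
    intro w hw i
    have hc : ∀ t : ↥T, ((w⁻¹ * (t : V ≃ₗ[k] V) * w)) ∈ T := by
      intro t
      apply (hw (w⁻¹ * (t : V ≃ₗ[k] V) * w)).mpr
      have hgr : w * (w⁻¹ * (t : V ≃ₗ[k] V) * w) * w⁻¹ = (t : V ≃ₗ[k] V) := by group
      rw [hgr]
      exact t.2
    set c : ↥T → ↥T := fun t => ⟨w⁻¹ * (t : V ≃ₗ[k] V) * w, hc t⟩ with hc_def
    have hkey : ∀ v ∈ Vi i, ∀ t : ↥T, (t : V ≃ₗ[k] V) (w v) = χ i (c t) • (w v) := by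
      intro v hv t
      have hgr : (t : V ≃ₗ[k] V) * w = w * (w⁻¹ * (t : V ≃ₗ[k] V) * w) := by group
      calc (t : V ≃ₗ[k] V) (w v) = ((t : V ≃ₗ[k] V) * w) v := rfl
        _ = (w * (w⁻¹ * (t : V ≃ₗ[k] V) * w)) v := by rw [hgr]
        _ = w (((c t : ↥T) : V ≃ₗ[k] V) v) := rfl
        _ = w (χ i (c t) • v) := by rw [hχ i (c t) v hv]
        _ = χ i (c t) • (w v) := by rw [map_smul]
    obtain ⟨v₀, hv₀mem, hv₀ne⟩ := (Submodule.ne_bot_iff _).mp (hne i)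
    have hwv₀ : w v₀ ≠ 0 := fun h => hv₀ne (by simpa using h)
    obtain ⟨j, hjmem, hjχ⟩ := heig (fun t => χ i (c t)) (w v₀) hwv₀ (hkey v₀ hv₀mem)
    refine ⟨j, fun v hv => ?_⟩
    by_cases hv0 : w v = 0
    · rw [hv0]; exact zero_mem _
    obtain ⟨j', hj'mem, hj'χ⟩ := heig (fun t => χ i (c t)) (w v) hv0 (hkey v hv)
    have hjj : j' = j := by
      by_contra hne'
      obtain ⟨t, ht⟩ := hdist j' j hne'
      exact ht ((hj'χ t).trans (hjχ t).symm)
    rw [← hjj]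
    exact hj'mem
  have hnormInv : ∀ s : V ≃ₗ[k] V, s ∈ T ↔ u⁻¹ * s * u⁻¹⁻¹ ∈ T := by
    intro s
    rw [inv_inv]
    have h := hnorm (u⁻¹ * s * u)
    have hgr : u * (u⁻¹ * s * u) * u⁻¹ = s := by group
    rw [hgr] at h
    exact h.symm
  choose σ hσ using hconj u hnorm
  choose τ hτ using hconj u⁻¹ hnormInv
  have hτσ : ∀ i, τ (σ i) = i := by
    intro i
    obtain ⟨v₀, hm, hne0⟩ := (Submodule.ne_bot_iff _).mp (hne i)
    have h2 : u⁻¹ (u v₀) ∈ Vi (τ (σ i)) := hτ _ _ (hσ i v₀ hm)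
    have h3 : u⁻¹ (u v₀) = v₀ := by
      calc u⁻¹ (u v₀) = (u⁻¹ * u) v₀ := rfl
        _ = v₀ := by rw [inv_mul_cancel]; rfl
    rw [h3] at h2
    by_contra hne'
    exact hne0 ((hπ_self i v₀ hm).symm.trans (hπ_ne hne' v₀ h2))
  have hστ : ∀ i, σ (τ i) = i := by
    intro i
    obtain ⟨v₀, hm, hne0⟩ := (Submodule.ne_bot_iff _).mp (hne i)
    have h2 : u (u⁻¹ v₀) ∈ Vi (σ (τ i)) := hσ _ _ (hτ i v₀ hm)
    have h3 : u (u⁻¹ v₀) = v₀ := by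
      calc u (u⁻¹ v₀) = (u * u⁻¹) v₀ := rfl
        _ = v₀ := by rw [mul_inv_cancel]; rfl
    rw [h3] at h2
    by_contra hne'
    exact hne0 ((hπ_self i v₀ hm).symm.trans (hπ_ne hne' v₀ h2))
  -- u maps Vi i onto Vi (σ i)
  have hmap : ∀ i, (Vi i).map (u : V →ₗ[k] V) = Vi (σ i) := by
    intro i
    apply le_antisymm
    · rintro _ ⟨v, hv, rfl⟩
      exact hσ i v hv
    · intro v hv
      refine ⟨u⁻¹ v, ?_, ?_⟩
      · have h := hτ (σ i) v hv
        rwa [hτσ i] at h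
      · show u (u⁻¹ v) = v
        calc u (u⁻¹ v) = (u * u⁻¹) v := rfl
          _ = v := by rw [mul_inv_cancel]; rfl
  have hdimσ : ∀ i, Module.finrank k (Vi (σ i)) = Module.finrank k (Vi i) := by
    intro i
    rw [← hmap i]
    exact LinearEquiv.finrank_map_eq u (Vi i)
  -- invariance under u gives invariance under N
  have hNmem : ∀ (W : Submodule k V), (∀ v ∈ W, u v ∈ W) → ∀ v ∈ W, N v ∈ W := by
    intro W hW v hv
    have h : N v = u v - v := by
      simp [hN_def, LinearMap.sub_apply]
    rw [h]
    exact sub_mem (hW v hv) hv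
  -- total dimension
  have htotal : ∑ i, Module.finrank k (Vi i) = n := by
    have h1 := auxFinrankBiSup Vi hdirect.submodule_iSupIndep Finset.univ
    have h2 : (⨆ i ∈ Finset.univ, Vi i) = (⊤ : Submodule k V) := by
      rw [← hdirect.submodule_iSup_eq_top]
      simp
    rw [h2] at h1
    rw [← h1, finrank_top]
  -- kernel of N
  have hker1 : Module.finrank k (LinearMap.ker (N ^ (1:ℕ))) = 1 := auxKerDim N hNn hreg hn
  have hkerN_le : ∀ m, 1 ≤ m → LinearMap.ker (N ^ (1:ℕ)) ≤ LinearMap.ker (N ^ m) := by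
    intro m hm v hv
    rw [LinearMap.mem_ker] at hv ⊢
    have h : N ^ m = N ^ (m - 1) * N ^ (1:ℕ) := by
      rw [← pow_add, Nat.sub_add_cancel hm]
    rw [h, Module.End.mul_apply, hv, map_zero]
  -- every nonempty σ-closed set is everything
  have hτinj : Function.Injective σ := by
    intro a b hab
    have h := congrArg τ hab
    rwa [hτσ, hτσ] at h
  have horbit : ∀ S : Finset I, S.Nonempty → (∀ i ∈ S, σ i ∈ S) → S = Finset.univ := by
    intro S hSne hScl
    by_contra hSuniv
    have hcne : Sᶜ.Nonempty := by
      rw [Finset.nonempty_iff_ne_empty]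
      intro h
      apply hSuniv
      rwa [Finset.compl_eq_empty_iff] at h
    have himg : S.image σ = S := by
      apply Finset.eq_of_subset_of_card_le
      · intro j hj
        obtain ⟨i, hi, rfl⟩ := Finset.mem_image.mp hj
        exact hScl i hi
      · rw [Finset.card_image_of_injective _ hτinj]
    have hccl : ∀ i ∈ Sᶜ, σ i ∈ Sᶜ := by
      intro i hi
      rw [Finset.mem_compl] at hi ⊢
      intro hmem
      rw [← himg] at hmem
      obtain ⟨i', hi', heq⟩ := Finset.mem_image.mp hmem
      exact hi (hτinj heq ▸ hi')
    have hWmem : ∀ (S' : Finset I), (∀ i ∈ S', σ i ∈ S') →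
        ∀ v ∈ (⨆ i ∈ S', Vi i), u v ∈ (⨆ i ∈ S', Vi i) := by
      intro S' hcl
      have hle : Submodule.map (u : V →ₗ[k] V) (⨆ i ∈ S', Vi i) ≤ ⨆ i ∈ S', Vi i := by
        rw [Submodule.map_iSup]
        apply iSup_le
        intro i
        rw [Submodule.map_iSup]
        apply iSup_le
        intro hi
        rw [hmap i]
        exact le_iSup₂ (f := fun i _ => Vi i) (σ i) (hcl i hi)
      exact fun v hv => hle ⟨v, hv, rfl⟩
    set WS := (⨆ i ∈ S, Vi i : Submodule k V) with hWS_def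
    set WC := (⨆ i ∈ Sᶜ, Vi i : Submodule k V) with hWC_def
    have hWSk := auxInvKer N hNn hreg WS (hNmem WS (hWmem S hScl))
    have hWCk := auxInvKer N hNn hreg WC (hNmem WC (hWmem Sᶜ hccl))
    obtain ⟨i₁, hi₁⟩ := hSne
    obtain ⟨i₂, hi₂⟩ := hcne
    have hWSne : WS ≠ ⊥ := by
      intro h
      apply hne i₁
      rw [← le_bot_iff, ← h]
      exact le_iSup₂ (f := fun i _ => Vi i) i₁ hi₁
    have hWCne : WC ≠ ⊥ := by
      intro h
      apply hne i₂
      rw [← le_bot_iff, ← h]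
      exact le_iSup₂ (f := fun i _ => Vi i) i₂ hi₂
    have h1S : 1 ≤ Module.finrank k WS := by
      rcases Nat.eq_zero_or_pos (Module.finrank k WS) with h | h
      · exact absurd (Submodule.finrank_eq_zero.mp h) hWSne
      · exact h
    have h1C : 1 ≤ Module.finrank k WC := by
      rcases Nat.eq_zero_or_pos (Module.finrank k WC) with h | h
      · exact absurd (Submodule.finrank_eq_zero.mp h) hWCne
      · exact h
    have hkerbot : LinearMap.ker (N ^ (1:ℕ)) ≠ ⊥ := by
      intro h
      rw [h, finrank_bot] at hker1
      omega
    obtain ⟨z, hz, hzne⟩ := (Submodule.ne_bot_iff _).mp hkerbot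
    have hzS : z ∈ WS := by rw [hWSk]; exact hkerN_le _ h1S hz
    have hzC : z ∈ WC := by rw [hWCk]; exact hkerN_le _ h1C hz
    have hdS := auxFinrankBiSup Vi hdirect.submodule_iSupIndep S
    have hdC := auxFinrankBiSup Vi hdirect.submodule_iSupIndep Sᶜ
    have hsum : Module.finrank k WS + Module.finrank k WC = n := by
      rw [hWS_def, hWC_def, hdS, hdC, Finset.sum_add_sum_compl, htotal]
    have hsup : WS ⊔ WC = (⊤ : Submodule k V) := by
      rw [← hdirect.submodule_iSup_eq_top]
      apply le_antisymm
      · apply sup_le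
        · exact iSup₂_le fun i _ => le_iSup Vi i
        · exact iSup₂_le fun i _ => le_iSup Vi i
      · apply iSup_le
        intro i
        by_cases hi : i ∈ S
        · exact le_sup_of_le_left (le_iSup₂ (f := fun i _ => Vi i) i hi)
        · exact le_sup_of_le_right
            (le_iSup₂ (f := fun i _ => Vi i) i (Finset.mem_compl.mpr hi))
    have hfr := Submodule.finrank_sup_add_finrank_inf_eq WS WC
    rw [hsup, finrank_top] at hfr
    have hinf : Module.finrank k (WS ⊓ WC : Submodule k V) = 0 := by omega
    have hbot : (WS ⊓ WC : Submodule k V) = ⊥ := Submodule.finrank_eq_zero.mp hinf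
    apply hzne
    have : z ∈ (WS ⊓ WC : Submodule k V) := ⟨hzS, hzC⟩
    rwa [hbot, Submodule.mem_bot] at this
  -- any function constant along σ is constant
  have hconst : ∀ (F : I → ℕ), (∀ i, F (σ i) = F i) → ∀ i j, F i = F j := by
    intro F hF i j
    set S : Finset I := Finset.univ.filter (fun l => F l = F i) with hS_def
    have hiS : i ∈ S := by simp [hS_def]
    have hcl : ∀ l ∈ S, σ l ∈ S := by
      intro l hl
      simp only [hS_def, Finset.mem_filter, Finset.mem_univ, true_and] at hl ⊢
      rw [hF l]
      exact hl
    have huniv := horbit S ⟨i, hiS⟩ hcl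
    have hjS : j ∈ S := huniv ▸ Finset.mem_univ j
    simp only [hS_def, Finset.mem_filter, Finset.mem_univ, true_and] at hjS
    exact hjS.symm
  -- I is nonempty
  have hIne : Nonempty I := by
    by_contra h
    rw [not_nonempty_iff] at h
    have h0 : ∑ i : I, Module.finrank k (Vi i) = 0 := by
      rw [Finset.univ_eq_empty, Finset.sum_empty]
    omega
  obtain ⟨i₀⟩ := hIne
  have hcardI : 0 < Fintype.card I := Fintype.card_pos_iff.mpr ⟨i₀⟩
  set d := Module.finrank k (Vi i₀) with hd_def
  have hdall : ∀ i, Module.finrank k (Vi i) = d :=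
    fun i => hconst (fun i => Module.finrank k (Vi i)) hdimσ i i₀
  have hcard : n = d * Fintype.card I := by
    rw [← htotal]
    rw [Finset.sum_congr rfl (fun i _ => hdall i), Finset.sum_const, smul_eq_mul,
      Finset.card_univ, mul_comm]
  refine ⟨d, hdall, hcard, ?_, ?_⟩
  · -- forward: a proper invariant subspace forces d > 1
    rintro ⟨W, hWbot, hWtop, hWu, hWT⟩
    have hWN := hNmem W hWu
    have hWk := auxInvKer N hNn hreg W hWN
    set j := Module.finrank k (↥W) with hj_def
    have hj_pos : 0 < j := by
      rcases Nat.eq_zero_or_pos j with h | h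
      · exact absurd (Submodule.finrank_eq_zero.mp h) hWbot
      · exact h
    have hj_lt : j < n := by
      rcases lt_or_eq_of_le (Submodule.finrank_le W) with h | h
      · exact h
      · exact absurd (Submodule.eq_top_of_finrank_eq h) hWtop
    -- projections of elements of W stay in W
    have hproj : ∀ (s : Finset I) (v : V), v ∈ W → (∀ l, l ∉ s → π l v = 0) →
        ∀ i, π i v ∈ W := by
      intro s
      induction s using Finset.strongInduction with
      | _ s ih =>
        intro v hv hsupp i
        by_cases hzero : π i v = 0
        · rw [hzero]; exact zero_mem W
        by_cases hex : ∃ l ∈ s, l ≠ i ∧ π l v ≠ 0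
        · obtain ⟨l, hls, hli, hlne⟩ := hex
          obtain ⟨t, ht⟩ := hdist i l (Ne.symm hli)
          set v' := (t : V ≃ₗ[k] V) v - χ l t • v with hv'_def
          have hv'W : v' ∈ W :=
            sub_mem (hWT (t : V ≃ₗ[k] V) t.2 v hv) (Submodule.smul_mem W _ hv)
          have hπv' : ∀ m, π m v' = (χ m t - χ l t) • π m v := by
            intro m
            rw [hv'_def, map_sub, map_smul, hact, sub_smul]
          have hv'supp : ∀ m, m ∉ s.erase l → π m v' = 0 := by
            intro m hm
            by_cases hml : m = l
            · rw [hπv', hml, sub_self, zero_smul]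
            · have hms : m ∉ s := fun hms => hm (Finset.mem_erase.mpr ⟨hml, hms⟩)
              rw [hπv', hsupp m hms, smul_zero]
          have hrec := ih (s.erase l) (Finset.erase_ssubset hls) v' hv'W hv'supp i
          rw [hπv' i] at hrec
          have hcne : χ i t - χ l t ≠ 0 := sub_ne_zero.mpr ht
          have hmem := Submodule.smul_mem W (χ i t - χ l t)⁻¹ hrec
          rwa [inv_smul_smul₀ hcne] at hmem
        · push_neg at hex
          have hvW : v = π i v := by
            conv_lhs => rw [← hπ_sum v]
            refine Finset.sum_eq_single i ?_ (fun h => absurd (Finset.mem_univ i) h)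
            intro l _ hli
            by_cases hls : l ∈ s
            · exact hex l hls hli
            · exact hsupp l hls
          rw [← hvW]
          exact hv
    set q : I → Submodule k V := fun i => W ⊓ Vi i with hq_def
    have hqind : iSupIndep q :=
      hdirect.submodule_iSupIndep.mono (fun i => inf_le_right)
    have hWsup : W = ⨆ i, q i := by
      apply le_antisymm
      · intro v hv
        have h1 : ∀ i, π i v ∈ q i := fun i =>
          ⟨hproj Finset.univ v hv (fun l hl => absurd (Finset.mem_univ l) hl) i, hπ_mem i v⟩
        have h2 : (∑ i, π i v) ∈ ⨆ i, q i :=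
          Submodule.sum_mem _ (fun i _ => Submodule.mem_iSup_of_mem i (h1 i))
        rwa [hπ_sum v] at h2
      · exact iSup_le fun i => inf_le_left
    have hWfr : j = ∑ i, Module.finrank k (q i) := by
      have h := auxFinrankBiSup q hqind Finset.univ
      have h2 : (⨆ i ∈ Finset.univ, q i) = ⨆ i, q i := by simp
      rw [h2, ← hWsup] at h
      exact h
    have hWu_eq : Submodule.map (u : V →ₗ[k] V) W = W := by
      apply Submodule.eq_of_le_of_finrank_eq
      · rintro _ ⟨v, hv, rfl⟩
        exact hWu v hv
      · rw [LinearEquiv.finrank_map_eq]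
    have hqmap : ∀ i, Submodule.map (u : V →ₗ[k] V) (q i) = q (σ i) := by
      intro i
      show Submodule.map (u : V →ₗ[k] V) (W ⊓ Vi i) = W ⊓ Vi (σ i)
      rw [Submodule.map_inf (u : V →ₗ[k] V) u.injective, hWu_eq, hmap i]
    have hqdim : ∀ i, Module.finrank k (q (σ i)) = Module.finrank k (q i) := by
      intro i
      rw [← hqmap i]
      exact LinearEquiv.finrank_map_eq u (q i)
    have hqconst := hconst (fun i => Module.finrank k (q i)) hqdim
    set e := Module.finrank k (q i₀) with he_def
    have hje : j = e * Fintype.card I := by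
      rw [hWfr]
      rw [Finset.sum_congr rfl (fun i _ => hqconst i i₀), Finset.sum_const, smul_eq_mul,
        Finset.card_univ, mul_comm]
    have he_lt : e < d := by
      have : e * Fintype.card I < d * Fintype.card I := by omega
      exact Nat.lt_of_mul_lt_mul_right this
    have he_pos : 0 < e := by
      rcases Nat.eq_zero_or_pos e with h | h
      · rw [h, zero_mul] at hje; omega
      · exact h
    omega
  · -- backward: d > 1 gives a proper invariant subspace
    intro hd
    set F := LinearMap.ker (N ^ (n - 1)) with hF_def
    have hFfr : Module.finrank k F = n - 1 := auxKerDim N hNn hreg (Nat.sub_le n 1)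
    have hFtop : F ≠ ⊤ := by
      intro h
      exact hreg (LinearMap.ker_eq_top.mp h)
    have hFu : ∀ v ∈ F, u v ∈ F := by
      intro v hv
      rw [hF_def, LinearMap.mem_ker] at hv ⊢
      have hcu : Commute ((u : Module.End k V)) N := by
        rw [hN_def]
        exact (Commute.refl _).sub_right (Commute.one_right _)
      have hcomm : N ^ (n - 1) * (u : Module.End k V)
          = (u : Module.End k V) * N ^ (n - 1) := (hcu.pow_right (n - 1)).symm
      calc (N ^ (n - 1)) (u v) = (N ^ (n - 1) * (u : Module.End k V)) v := rfl
        _ = ((u : Module.End k V) * N ^ (n - 1)) v := by rw [hcomm]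
        _ = u ((N ^ (n - 1)) v) := rfl
        _ = 0 := by rw [hv, map_zero]
    have hFmap : Submodule.map (u : V →ₗ[k] V) F ≤ F := by
      rintro _ ⟨v, hv, rfl⟩
      exact hFu v hv
    set W := (⨆ i, (Vi i ⊓ F) : Submodule k V) with hW_def
    refine ⟨W, ?_, ?_, ?_, ?_⟩
    · -- W ≠ ⊥
      have h := Submodule.finrank_sup_add_finrank_inf_eq (Vi i₀) F
      have hsle : Module.finrank k ↥(Vi i₀ ⊔ F : Submodule k V) ≤ n := Submodule.finrank_le _
      rw [hdall i₀, hFfr] at h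
      have hge : 1 ≤ Module.finrank k ↥(Vi i₀ ⊓ F : Submodule k V) := by omega
      intro hbot
      have hle : Vi i₀ ⊓ F ≤ (⊥ : Submodule k V) := hbot ▸ le_iSup (fun i => Vi i ⊓ F) i₀
      rw [le_bot_iff.mp hle, finrank_bot] at hge
      omega
    · -- W ≠ ⊤
      intro htop
      apply hFtop
      have hle : W ≤ F := iSup_le fun i => inf_le_right
      rw [htop] at hle
      exact le_antisymm le_top hle
    · -- invariance under u
      have hle : Submodule.map (u : V →ₗ[k] V) W ≤ W := by
        rw [hW_def, Submodule.map_iSup]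
        apply iSup_le
        intro i
        rw [Submodule.map_inf (u : V →ₗ[k] V) u.injective, hmap i]
        refine le_trans (inf_le_inf_left _ hFmap) (le_iSup (fun i => Vi i ⊓ F) (σ i))
      exact fun v hv => hle ⟨v, hv, rfl⟩
    · -- invariance under T
      intro t ht v hv
      refine Submodule.iSup_induction (motive := fun x => t x ∈ W) (fun i => Vi i ⊓ F) hv
        (fun i x hx => ?_) ?_ (fun x y hx hy => ?_)
      · have hxV : x ∈ Vi i := hx.1
        show t x ∈ W
        rw [(hχ i ⟨t, ht⟩ x hxV : t x = χ i ⟨t, ht⟩ • x)]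
        have hmem : χ i ⟨t, ht⟩ • x ∈ Vi i ⊓ F := Submodule.smul_mem _ _ hx
        exact Submodule.mem_iSup_of_mem i hmem
      · show t (0 : V) ∈ W
        rw [map_zero]
        exact zero_mem W
      · show t (x + y) ∈ W
        rw [map_add]
        exact add_mem hx hy
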